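/- Let Z ≥ 2 and let c_1, ..., c_Z be positive integers; set N = ∑_{j=1}^Z c_j². The following are equivalent: (i) there exist signs s_1, ..., s_Z ∈ {−1, +1} with ∑_{j=1}^Z s_j c_j = 0; (ii) there exist real Z-dimensional quantum states ρ_1, ..., ρ_{2Z} and two real Z-dimensional POVMs (E_{1,1}, ..., E_{1,Z}) and (E_{2,1}, ..., E_{2,Z}) such that: tr(ρ_x E_{1,z}) = δ_{x,z} for all x, z ∈ {1,...,Z}; tr(ρ_{Z+x} E_{2,z}) = δ_{x,z} for all x, z ∈ {1,...,Z}; tr(ρ_x E_{2,1}) = c_x²/N and tr(ρ_x E_{2,2}) = 1/Z for all x ∈ {1,...,Z}; and tr(ρ_{Z+1} E_{1,z}) = c_z²/N and tr(ρ_{Z+2} E_{1,z}) = 1/Z for all z ∈ {1,...,Z}. -/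

import Mathlib

open Matrix

section helpers
variable {d : ℕ}

lemma trace_vmv_mul (u v : Fin d → ℝ) :
    (vecMulVec u u * vecMulVec v v).trace = (∑ i, u i * v i) ^ 2 := by
  simp only [Matrix.trace, Matrix.diag, Matrix.mul_apply, vecMulVec_apply, sq,
    Finset.sum_mul_sum]
  rw [Finset.sum_comm]
  congr 1; ext i; congr 1; ext j; ring

lemma trace_vmv (u : Fin d → ℝ) : (vecMulVec u u).trace = ∑ i, u i ^ 2 := by
  simp [Matrix.trace, Matrix.diag, vecMulVec_apply, sq]

lemma posSemidef_vmv (u : Fin d → ℝ) : (vecMulVec u u).PosSemidef := by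
  refine .of_dotProduct_mulVec_nonneg ?_ ?_
  · ext i j
    simp [Matrix.conjTranspose_apply, vecMulVec_apply, mul_comm]
  · intro x
    have : dotProduct (star x) (vecMulVec u u *ᵥ x) = (∑ i, u i * x i) ^ 2 := by
      simp only [dotProduct, mulVec, dotProduct, vecMulVec_apply, star_trivial, sq,
        Finset.sum_mul_sum]
      congr 1; ext i; rw [Finset.mul_sum]; congr 1; ext j; ring
    rw [this]
    positivity

lemma psd_diag_nonneg {M : Matrix (Fin d) (Fin d) ℝ} (hM : M.PosSemidef) (i : Fin d) :
    0 ≤ M i i := by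
  have := hM.dotProduct_mulVec_nonneg (Pi.single i 1)
  simpa [dotProduct, mulVec, Pi.single_apply] using this

lemma psd_trace_nonneg {M : Matrix (Fin d) (Fin d) ℝ} (hM : M.PosSemidef) : 0 ≤ M.trace :=
  Finset.sum_nonneg fun i _ => psd_diag_nonneg hM i

lemma psd_diag_le_trace {M : Matrix (Fin d) (Fin d) ℝ} (hM : M.PosSemidef) (i : Fin d) :
    M i i ≤ M.trace :=
  Finset.single_le_sum (fun j _ => psd_diag_nonneg hM j) (Finset.mem_univ i)

lemma trace_diagonal_mul (f : Fin d → ℝ) (M : Matrix (Fin d) (Fin d) ℝ) :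
    (Matrix.diagonal f * M).trace = ∑ i, f i * M i i := by
  simp [Matrix.trace, Matrix.diag, Matrix.diagonal_mul]

lemma spectral' {A : Matrix (Fin d) (Fin d) ℝ} (hH : A.IsHermitian) :
    ∃ U : Matrix (Fin d) (Fin d) ℝ, star U * U = 1 ∧ U * star U = 1 ∧
      A = U * Matrix.diagonal hH.eigenvalues * star U := by
  refine ⟨hH.eigenvectorUnitary, Matrix.mem_unitaryGroup_iff'.mp hH.eigenvectorUnitary.2,
    Matrix.mem_unitaryGroup_iff.mp hH.eigenvectorUnitary.2, ?_⟩
  have hdiag : Matrix.diagonal (RCLike.ofReal ∘ hH.eigenvalues)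
      = Matrix.diagonal hH.eigenvalues := by congr 1
  rw [← hdiag]; exact hH.spectral_theorem

lemma psd_trace_mul_le {A B : Matrix (Fin d) (Fin d) ℝ} (hA : A.PosSemidef)
    (hB : B.PosSemidef) : (A * B).trace ≤ A.trace * B.trace := by
  have hH := hA.1
  obtain ⟨U, hUU, hUU', hspec⟩ := spectral' hH
  have hMpsd : (star U * B * U).PosSemidef := by
    simpa [Matrix.mul_assoc, Matrix.star_eq_conjTranspose, Matrix.conjTranspose_eq_transpose_of_trivial] using hB.conjTranspose_mul_mul_same (B := U)
  have htrM : (star U * B * U).trace = B.trace := by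
    rw [Matrix.trace_mul_cycle, hUU', Matrix.one_mul]
  have htrA : A.trace = ∑ i, hH.eigenvalues i := by
    conv_lhs => rw [hspec]
    rw [Matrix.trace_mul_cycle, hUU, Matrix.one_mul, Matrix.trace_diagonal]
  have key : (A * B).trace = ∑ i, hH.eigenvalues i * (star U * B * U) i i := by
    conv_lhs => rw [hspec]
    rw [Matrix.mul_assoc, Matrix.trace_mul_comm, ← Matrix.mul_assoc, Matrix.trace_mul_comm,
      trace_diagonal_mul]
  rw [key, htrA, ← htrM, Finset.sum_mul]
  apply Finset.sum_le_sum
  intro i _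
  exact mul_le_mul_of_nonneg_left (psd_diag_le_trace hMpsd i) (hA.eigenvalues_nonneg i)

lemma herm_trace_sq_eq {M : Matrix (Fin d) (Fin d) ℝ} (hM : M.IsHermitian) :
    (M * M).trace = ∑ i, ∑ j, (M i j) ^ 2 := by
  have hsym : ∀ i j, M j i = M i j := fun i j => by
    conv_lhs => rw [← hM]
    simp [Matrix.conjTranspose_apply]
  simp only [Matrix.trace, Matrix.diag, Matrix.mul_apply, sq]
  congr 1; ext i; congr 1; ext j; rw [hsym i j]

lemma herm_trace_sq_nonneg {M : Matrix (Fin d) (Fin d) ℝ} (hM : M.IsHermitian) :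
    0 ≤ (M * M).trace := by
  rw [herm_trace_sq_eq hM]
  exact Finset.sum_nonneg fun i _ => Finset.sum_nonneg fun j _ => sq_nonneg _

lemma herm_eq_zero_of_trace_sq {M : Matrix (Fin d) (Fin d) ℝ} (hM : M.IsHermitian)
    (h : (M * M).trace = 0) : M = 0 := by
  rw [herm_trace_sq_eq hM] at h
  ext i j
  have := (Finset.sum_eq_zero_iff_of_nonneg (fun i _ => Finset.sum_nonneg
    (fun j _ => sq_nonneg (M i j)))).mp h i (Finset.mem_univ i)
  have := (Finset.sum_eq_zero_iff_of_nonneg (fun j _ => sq_nonneg (M i j))).mp this j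
    (Finset.mem_univ j)
  simpa using pow_eq_zero_iff (n := 2) (by norm_num) |>.mp this

lemma psd_rank_one {A : Matrix (Fin d) (Fin d) ℝ} (hA : A.PosSemidef) (h1 : A.trace = 1)
    (h2 : (A * A).trace = 1) : ∃ u : Fin d → ℝ, A = vecMulVec u u := by
  have hH := hA.1
  obtain ⟨U, hUU, hUU', hspec⟩ := spectral' hH
  have htrA : ∑ i, hH.eigenvalues i = 1 := by
    rw [← h1]
    conv_rhs => rw [hspec]
    rw [Matrix.trace_mul_cycle, hUU, Matrix.one_mul, Matrix.trace_diagonal]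
  have hAA : A * A = U * (Matrix.diagonal hH.eigenvalues * Matrix.diagonal hH.eigenvalues)
      * star U := by
    conv_lhs => rw [hspec]
    rw [Matrix.mul_assoc (U * Matrix.diagonal hH.eigenvalues) (star U),
      ← Matrix.mul_assoc (star U), ← Matrix.mul_assoc (star U), hUU, Matrix.one_mul,
      Matrix.mul_assoc U, ← Matrix.mul_assoc (Matrix.diagonal hH.eigenvalues)
        (Matrix.diagonal hH.eigenvalues), ← Matrix.mul_assoc U]
  have htrA2 : ∑ i, hH.eigenvalues i ^ 2 = 1 := by
    rw [← h2, hAA, Matrix.diagonal_mul_diagonal, Matrix.trace_mul_cycle, hUU, Matrix.one_mul,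
      Matrix.trace_diagonal]
    congr 1; ext i; ring
  have hnn := hA.eigenvalues_nonneg
  have hle1 : ∀ i, hH.eigenvalues i ≤ 1 := by
    intro i
    rw [← htrA]
    exact Finset.single_le_sum (fun j _ => hnn j) (Finset.mem_univ i)
  have h01 : ∀ i, hH.eigenvalues i = 0 ∨ hH.eigenvalues i = 1 := by
    have hzero : ∑ i, hH.eigenvalues i * (1 - hH.eigenvalues i) = 0 := by
      have : ∀ i, hH.eigenvalues i * (1 - hH.eigenvalues i)
          = hH.eigenvalues i - hH.eigenvalues i ^ 2 := fun i => by ring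
      simp only [this, Finset.sum_sub_distrib, htrA, htrA2, sub_self]
    intro i
    have := (Finset.sum_eq_zero_iff_of_nonneg (fun j _ =>
      mul_nonneg (hnn j) (by linarith [hle1 j]))).mp hzero i (Finset.mem_univ i)
    rcases mul_eq_zero.mp this with h | h
    · exact Or.inl h
    · exact Or.inr (by linarith)
  obtain ⟨i₀, hi₀⟩ : ∃ i, hH.eigenvalues i = 1 := by
    by_contra hcon
    push_neg at hcon
    have : ∀ i ∈ Finset.univ, hH.eigenvalues i = 0 := fun i _ =>
      (h01 i).resolve_right (hcon i)
    rw [Finset.sum_eq_zero this] at htrA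
    norm_num at htrA
  have hv : ∀ l, hH.eigenvalues l = if l = i₀ then 1 else 0 := by
    intro l
    by_cases hl : l = i₀
    · simp [hl, hi₀]
    · simp only [hl, if_false]
      rcases h01 l with h | h
      · exact h
      · exfalso
        have h0 : ∑ i ∈ ({l, i₀} : Finset (Fin d)), hH.eigenvalues i ≤ 1 := by
          rw [← htrA]
          exact Finset.sum_le_sum_of_subset_of_nonneg (Finset.subset_univ _)
            (fun j _ _ => hnn j)
        rw [Finset.sum_pair hl] at h0
        rw [h, hi₀] at h0
        norm_num at h0
  refine ⟨fun i => U i i₀, ?_⟩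
  ext i j
  conv_lhs => rw [hspec]
  rw [Matrix.mul_assoc]
  simp [Matrix.mul_apply, Matrix.diagonal_apply, Matrix.star_apply, hv,
    Finset.sum_ite_eq, Finset.sum_ite_eq', mul_ite, ite_mul, Matrix.vecMulVec_apply]

lemma sum_dot {Z : ℕ} {u : Fin Z → Fin Z → ℝ}
    (hsum : ∀ i j, (∑ x, u x i * u x j) = if i = j then 1 else 0) (v w : Fin Z → ℝ) :
    ∑ x, (∑ i, u x i * v i) * (∑ j, u x j * w j) = ∑ i, v i * w i := by
  have hrw : ∀ x, (∑ i, u x i * v i) * (∑ j, u x j * w j)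
      = ∑ i, ∑ j, v i * w j * (u x i * u x j) := by
    intro x; rw [Finset.sum_mul_sum]; congr 1; ext i; congr 1; ext j; ring
  calc ∑ x, (∑ i, u x i * v i) * (∑ j, u x j * w j)
      = ∑ i, ∑ j, v i * w j * ∑ x, (u x i * u x j) := by
        simp only [hrw]
        rw [Finset.sum_comm]
        refine Finset.sum_congr rfl fun i _ => ?_
        rw [Finset.sum_comm]
        refine Finset.sum_congr rfl fun j _ => ?_
        rw [← Finset.mul_sum]
    _ = ∑ i, v i * w i := by
        simp only [hsum]
        simp [Finset.sum_ite_eq', mul_ite, mul_one, mul_zero]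

end helpers

/-- A real `d`-dimensional quantum state: a positive semidefinite real symmetric `d × d`
matrix of trace 1. -/
def IsStateR {d : ℕ} (ρ : Matrix (Fin d) (Fin d) ℝ) : Prop :=
  ρ.PosSemidef ∧ ρ.trace = 1

/-- A real `d`-dimensional POVM with `Z` outcomes: positive semidefinite real symmetric
`d × d` matrices summing to the identity. -/
def IsPOVMR {d Z : ℕ} (E : Fin Z → Matrix (Fin d) (Fin d) ℝ) : Prop :=
  (∀ z, (E z).PosSemidef) ∧ ∑ z, E z = 1

lemma povm_eq_states {Z : ℕ} {ρ E : Fin Z → Matrix (Fin Z) (Fin Z) ℝ}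
    (hρ : ∀ x, IsStateR (ρ x)) (hE : IsPOVMR E)
    (h : ∀ z, (ρ z * E z).trace = 1) : ∀ z, E z = ρ z := by
  have htr1 : ∀ z, (1 : ℝ) ≤ (E z).trace := fun z => by
    have := psd_trace_mul_le (hρ z).1 (hE.1 z)
    rw [h z, (hρ z).2, one_mul] at this; exact this
  have hsum : ∑ z, (E z).trace = (Z : ℝ) := by
    rw [← Matrix.trace_sum, hE.2, Matrix.trace_one]; simp
  have htr : ∀ z, (E z).trace = 1 := by
    by_contra hcon
    push_neg at hcon
    obtain ⟨z0, hz0⟩ := hcon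
    have hlt : (1 : ℝ) < (E z0).trace := lt_of_le_of_ne (htr1 z0) (Ne.symm hz0)
    have : (Z : ℝ) < ∑ z, (E z).trace := by
      calc (Z : ℝ) = ∑ _z : Fin Z, (1 : ℝ) := by simp
        _ < ∑ z, (E z).trace :=
          Finset.sum_lt_sum (fun i _ => htr1 i) ⟨z0, Finset.mem_univ _, hlt⟩
    rw [hsum] at this; exact lt_irrefl _ this
  intro z
  have hρz := hρ z
  have hEz := hE.1 z
  have hM : (ρ z - E z).IsHermitian := hρz.1.1.sub hEz.1
  have hsq : ((ρ z - E z) * (ρ z - E z)).trace ≤ 0 := by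
    have e1 : (ρ z * ρ z).trace ≤ 1 := by
      have := psd_trace_mul_le hρz.1 hρz.1
      rw [hρz.2] at this; simpa using this
    have e2 : (E z * E z).trace ≤ 1 := by
      have := psd_trace_mul_le hEz hEz
      rw [htr z] at this; simpa using this
    have e3 : (E z * ρ z).trace = 1 := by rw [Matrix.trace_mul_comm]; exact h z
    have expand : (ρ z - E z) * (ρ z - E z)
        = ρ z * ρ z - ρ z * E z - E z * ρ z + E z * E z := by
      noncomm_ring
    rw [expand, Matrix.trace_add, Matrix.trace_sub, Matrix.trace_sub, h z, e3]
    linarith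
  have hzero := herm_eq_zero_of_trace_sq hM (le_antisymm hsq (herm_trace_sq_nonneg hM))
  have := sub_eq_zero.mp hzero
  exact this.symm

/-- States `ρ_1, …, ρ_{2Z}` are encoded as two families `ρ x = ρ_x` and `σ x = ρ_{Z+x}`
for `x ∈ {1,…,Z}`. -/
theorem stmt7 {Z : ℕ} (hZ : 2 ≤ Z) (c : Fin Z → ℕ) (hc : ∀ j, 0 < c j) :
    (∃ s : Fin Z → ℤ, (∀ j, s j = 1 ∨ s j = -1) ∧ ∑ j, s j * (c j : ℤ) = 0) ↔
      ∃ (ρ σ : Fin Z → Matrix (Fin Z) (Fin Z) ℝ)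
        (E₁ E₂ : Fin Z → Matrix (Fin Z) (Fin Z) ℝ),
        (∀ x, IsStateR (ρ x)) ∧ (∀ x, IsStateR (σ x)) ∧
        IsPOVMR E₁ ∧ IsPOVMR E₂ ∧
        (∀ x z, (ρ x * E₁ z).trace = if x = z then 1 else 0) ∧
        (∀ x z, (σ x * E₂ z).trace = if x = z then 1 else 0) ∧
        (∀ x, (ρ x * E₂ ⟨0, by omega⟩).trace = (c x : ℝ) ^ 2 / ∑ j, (c j : ℝ) ^ 2) ∧
        (∀ x, (ρ x * E₂ ⟨1, by omega⟩).trace = 1 / (Z : ℝ)) ∧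
        (∀ z, (σ ⟨0, by omega⟩ * E₁ z).trace = (c z : ℝ) ^ 2 / ∑ j, (c j : ℝ) ^ 2) ∧
        (∀ z, (σ ⟨1, by omega⟩ * E₁ z).trace = 1 / (Z : ℝ)) := by
  have hZ0 : 0 < Z := by omega
  have hZR : (0 : ℝ) < (Z : ℝ) := by exact_mod_cast hZ0
  set N : ℝ := ∑ j, (c j : ℝ) ^ 2 with hNdef
  have hN : 0 < N := by
    refine Finset.sum_pos (fun j _ => ?_) ⟨⟨0, hZ0⟩, Finset.mem_univ _⟩
    have : (0 : ℝ) < (c j : ℝ) := by exact_mod_cast hc j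
    positivity
  have hNne : N ≠ 0 := ne_of_gt hN
  have hsN : (0:ℝ) < Real.sqrt N := Real.sqrt_pos.mpr hN
  have hsZ : (0:ℝ) < Real.sqrt (Z:ℝ) := Real.sqrt_pos.mpr hZR
  have h01 : (⟨0, by omega⟩ : Fin Z) ≠ ⟨1, by omega⟩ := by
    intro h
    have := congrArg Fin.val h
    simp at this
  constructor
  · -- forward direction
    rintro ⟨s, hs, hsum0⟩
    have hs2 : ∀ j, ((s j : ℝ)) ^ 2 = 1 := by
      intro j; rcases hs j with h | h <;> rw [h] <;> norm_num
    -- the two special unit vectors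
    set w0 : EuclideanSpace ℝ (Fin Z) := WithLp.toLp 2 (fun j => (c j : ℝ) / Real.sqrt N) with hw0
    set w1 : EuclideanSpace ℝ (Fin Z) := WithLp.toLp 2 (fun j => (s j : ℝ) / Real.sqrt (Z:ℝ)) with hw1
    have inner00 : ∑ i, w0 i * w0 i = 1 := by
      have hterm : ∀ j : Fin Z, w0 j * w0 j = (c j : ℝ) ^ 2 / N := by
        intro j
        simp only [hw0, PiLp.toLp_apply]
        rw [div_mul_div_comm, ← pow_two, ← pow_two, Real.sq_sqrt hN.le]
      rw [Finset.sum_congr rfl fun j _ => hterm j, ← Finset.sum_div, ← hNdef, div_self hNne]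
    have inner11 : ∑ i, w1 i * w1 i = 1 := by
      have hterm : ∀ j : Fin Z, w1 j * w1 j = 1 / (Z : ℝ) := by
        intro j
        simp only [hw1, PiLp.toLp_apply]
        rw [div_mul_div_comm, ← pow_two, ← pow_two, Real.sq_sqrt hZR.le, hs2]
      rw [Finset.sum_congr rfl fun j _ => hterm j, Finset.sum_const, Finset.card_univ,
        Fintype.card_fin, nsmul_eq_mul]
      field_simp
    have inner01 : ∑ i, w0 i * w1 i = 0 := by
      have hterm : ∀ j : Fin Z, w0 j * w1 j
          = (c j : ℝ) * (s j : ℝ) / (Real.sqrt N * Real.sqrt (Z:ℝ)) := by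
        intro j
        simp only [hw0, hw1, PiLp.toLp_apply]
        rw [div_mul_div_comm]
      rw [Finset.sum_congr rfl fun j _ => hterm j, ← Finset.sum_div]
      have : ∑ i, (c i : ℝ) * (s i : ℝ) = 0 := by
        have := congrArg (fun t : ℤ => (t : ℝ)) hsum0
        push_cast at this
        rw [← this]
        exact Finset.sum_congr rfl fun i _ => by ring
      rw [this, zero_div]
    -- extend to an orthonormal basis
    set v : Fin Z → EuclideanSpace ℝ (Fin Z) :=
      fun i => if i = ⟨0, by omega⟩ then w0 else w1 with hv
    have hvon : Orthonormal ℝ (({⟨0, by omega⟩, ⟨1, by omega⟩} : Set (Fin Z)).restrict v) := by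
      rw [orthonormal_iff_ite]
      rintro ⟨a, ha⟩ ⟨b, hb⟩
      simp only [Set.restrict, Set.restrict_apply, Subtype.mk_eq_mk]
      have inner_eq : ∀ x y : EuclideanSpace ℝ (Fin Z),
          (inner ℝ x y : ℝ) = ∑ i, x i * y i := by
        intro x y
        rw [PiLp.inner_apply]
        simp [mul_comm]
      rcases ha with ha | ha <;> rcases hb with hb | hb <;>
        subst ha <;> subst hb <;> simp only [inner_eq] <;>
        simp [hv, h01, h01.symm, inner_eq, inner00, inner11, inner01,
          (by rw [← inner01]; exact Finset.sum_congr rfl fun i _ => mul_comm _ _ :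
            ∑ i, w1 i * w0 i = 0)]
    obtain ⟨b, hb⟩ := hvon.exists_orthonormalBasis_extension_of_card_eq
      (by simp) (v := v)
    have hb0 : b ⟨0, by omega⟩ = w0 := by
      rw [hb ⟨0, by omega⟩ (by simp)]
      simp [hv]
    have hb1 : b ⟨1, by omega⟩ = w1 := by
      rw [hb ⟨1, by omega⟩ (by simp)]
      simp [hv, h01.symm]
    -- the vectors
    set vv : Fin Z → Fin Z → ℝ := fun z i => b z i with hvvdef
    have hon : ∀ x z, ∑ i, vv x i * vv z i = if x = z then 1 else 0 := by
      intro x z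
      have := orthonormal_iff_ite.mp b.orthonormal x z
      rw [← this, PiLp.inner_apply]
      simp [hvvdef, mul_comm]
    have hcomp : ∀ i j, ∑ z, vv z i * vv z j = if i = j then 1 else 0 := by
      have hBB : (Matrix.of vv) * (Matrix.of vv)ᵀ = 1 := by
        ext x z
        simp only [Matrix.mul_apply, Matrix.transpose_apply, Matrix.of_apply, Matrix.one_apply]
        exact hon x z
      have hBB' : (Matrix.of vv)ᵀ * (Matrix.of vv) = 1 := mul_eq_one_comm.mp hBB
      intro i j
      have := congrArg (fun M => M i j) hBB'
      simpa [Matrix.mul_apply, Matrix.transpose_apply, Matrix.one_apply] using this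
    -- basis vectors of the standard basis
    set e : Fin Z → Fin Z → ℝ := fun x i => if x = i then 1 else 0 with hedef
    have hee : ∀ x z, ∑ i, e x i * e z i = if x = z then 1 else 0 := by
      intro x z
      simp [hedef, ite_mul, Finset.sum_ite_eq]
    have hev : ∀ x (u : Fin Z → ℝ), ∑ i, e x i * u i = u x := by
      intro x u
      simp [hedef, ite_mul, Finset.sum_ite_eq]
    refine ⟨fun x => vecMulVec (e x) (e x), fun z => vecMulVec (vv z) (vv z),
      fun x => vecMulVec (e x) (e x), fun z => vecMulVec (vv z) (vv z),
      ?_, ?_, ?_, ?_, ?_, ?_, ?_, ?_, ?_, ?_⟩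
    · intro x
      refine ⟨posSemidef_vmv _, ?_⟩
      rw [trace_vmv]
      calc ∑ i, e x i ^ 2 = ∑ i, e x i * e x i :=
            Finset.sum_congr rfl fun i _ => pow_two _
        _ = if x = x then 1 else 0 := hee x x
        _ = 1 := if_pos rfl
    · intro x
      refine ⟨posSemidef_vmv _, ?_⟩
      rw [trace_vmv]
      calc ∑ i, vv x i ^ 2 = ∑ i, vv x i * vv x i :=
            Finset.sum_congr rfl fun i _ => pow_two _
        _ = if x = x then 1 else 0 := hon x x
        _ = 1 := if_pos rfl
    · refine ⟨fun z => posSemidef_vmv _, ?_⟩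
      ext i j
      simp only [Matrix.sum_apply, vecMulVec_apply, Matrix.one_apply]
      simp [hedef, ite_mul, Finset.sum_ite_eq', eq_comm]
    · refine ⟨fun z => posSemidef_vmv _, ?_⟩
      ext i j
      simp only [Matrix.sum_apply, vecMulVec_apply, Matrix.one_apply]
      exact hcomp i j
    · intro x z
      rw [trace_vmv_mul, hee x z]
      split_ifs <;> norm_num
    · intro x z
      rw [trace_vmv_mul, hon x z]
      split_ifs <;> norm_num
    · intro x
      rw [trace_vmv_mul, hev x]
      have : vv ⟨0, by omega⟩ x = (c x : ℝ) / Real.sqrt N := by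
        simp [hvvdef, hb0, hw0]
      rw [this, div_pow, Real.sq_sqrt hN.le]
    · intro x
      rw [trace_vmv_mul, hev x]
      have : vv ⟨1, by omega⟩ x = (s x : ℝ) / Real.sqrt (Z:ℝ) := by
        simp [hvvdef, hb1, hw1]
      rw [this, div_pow, Real.sq_sqrt hZR.le, hs2]
    · intro z
      rw [trace_vmv_mul]
      have : ∑ i, vv ⟨0, by omega⟩ i * e z i = vv ⟨0, by omega⟩ z := by
        rw [← hev z (vv ⟨0, by omega⟩)]
        exact Finset.sum_congr rfl fun i _ => mul_comm _ _
      rw [this]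
      have : vv ⟨0, by omega⟩ z = (c z : ℝ) / Real.sqrt N := by
        simp [hvvdef, hb0, hw0]
      rw [this, div_pow, Real.sq_sqrt hN.le]
    · intro z
      rw [trace_vmv_mul]
      have : ∑ i, vv ⟨1, by omega⟩ i * e z i = vv ⟨1, by omega⟩ z := by
        rw [← hev z (vv ⟨1, by omega⟩)]
        exact Finset.sum_congr rfl fun i _ => mul_comm _ _
      rw [this]
      have : vv ⟨1, by omega⟩ z = (s z : ℝ) / Real.sqrt (Z:ℝ) := by
        simp [hvvdef, hb1, hw1]
      rw [this, div_pow, Real.sq_sqrt hZR.le, hs2]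
  · -- backward direction
    rintro ⟨ρ, σ, E₁, E₂, hρ, hσ, hE₁, hE₂, hρE₁, hσE₂, hρE₂0, hρE₂1, hσ0E₁, hσ1E₁⟩
    have hE1eq : ∀ z, E₁ z = ρ z :=
      povm_eq_states hρ hE₁ (fun z => by have := hρE₁ z z; simpa using this)
    have hE2eq : ∀ z, E₂ z = σ z :=
      povm_eq_states hσ hE₂ (fun z => by have := hσE₂ z z; simpa using this)
    have hρ1 : ∀ x, ∃ w, ρ x = vecMulVec w w := fun x =>
      psd_rank_one (hρ x).1 (hρ x).2
        (by have := hρE₁ x x; rw [hE1eq x] at this; simpa using this)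
    choose u hu using hρ1
    have hσ1 : ∀ x, ∃ w, σ x = vecMulVec w w := fun x =>
      psd_rank_one (hσ x).1 (hσ x).2
        (by have := hσE₂ x x; rw [hE2eq x] at this; simpa using this)
    choose v hv using hσ1
    have hsumρ : ∑ x, vecMulVec (u x) (u x) = 1 := by
      rw [show (∑ x, vecMulVec (u x) (u x)) = ∑ x, E₁ x from
        Finset.sum_congr rfl fun x _ => by rw [hE1eq x, hu x], hE₁.2]
    have hcomp : ∀ i j, ∑ x, u x i * u x j = if i = j then 1 else 0 := by
      intro i j
      have := congrArg (fun M => M i j) hsumρ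
      simpa [Matrix.sum_apply, vecMulVec_apply, Matrix.one_apply] using this
    set v0 : Fin Z → ℝ := v ⟨0, by omega⟩ with hv0
    set v1 : Fin Z → ℝ := v ⟨1, by omega⟩ with hv1
    set p : Fin Z → ℝ := fun x => ∑ i, u x i * v0 i with hp
    set q : Fin Z → ℝ := fun x => ∑ i, u x i * v1 i with hq
    have hp2 : ∀ x, p x ^ 2 = (c x : ℝ) ^ 2 / N := by
      intro x
      have h := hρE₂0 x
      rw [hE2eq, hv, hu x, trace_vmv_mul] at h
      exact h
    have hq2 : ∀ x, q x ^ 2 = 1 / (Z : ℝ) := by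
      intro x
      have h := hρE₂1 x
      rw [hE2eq, hv, hu x, trace_vmv_mul] at h
      exact h
    have hortho : ∑ i, v0 i * v1 i = 0 := by
      have h := hσE₂ ⟨0, by omega⟩ ⟨1, by omega⟩
      rw [if_neg h01, hE2eq, hv, hv, trace_vmv_mul] at h
      exact pow_eq_zero_iff (n := 2) (by norm_num) |>.mp h
    have hsum : ∑ x, p x * q x = 0 := by
      rw [hp, hq]
      simpa using (sum_dot hcomp v0 v1).trans hortho
    set r : ℝ := Real.sqrt N * Real.sqrt (Z : ℝ) with hrdef
    have hr : 0 < r := mul_pos hsN hsZ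
    have hpm : ∀ x, p x * q x = (c x : ℝ) / r ∨ p x * q x = -((c x : ℝ) / r) := by
      intro x
      have hsq : (p x * q x) ^ 2 = ((c x : ℝ) / r) ^ 2 := by
        rw [mul_pow, hp2, hq2, div_pow, hrdef, mul_pow, Real.sq_sqrt hN.le,
          Real.sq_sqrt hZR.le, div_mul_div_comm, mul_one]
      exact sq_eq_sq_iff_eq_or_eq_neg.mp hsq
    refine ⟨fun x => if p x * q x = (c x : ℝ) / r then 1 else -1,
      fun j => by by_cases h : p j * q j = (c j : ℝ) / r <;> simp [h], ?_⟩
    have hreal : ∑ x, ((if p x * q x = (c x : ℝ) / r then (1 : ℝ) else -1) * (c x : ℝ)) = 0 := by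
      have hterm : ∀ x, (if p x * q x = (c x : ℝ) / r then (1 : ℝ) else -1) * (c x : ℝ)
          = (p x * q x) * r := by
        intro x
        by_cases hx : p x * q x = (c x : ℝ) / r
        · rw [if_pos hx, hx, one_mul, div_mul_cancel₀ _ (ne_of_gt hr)]
        · rw [if_neg hx, (hpm x).resolve_left hx]
          field_simp
      rw [Finset.sum_congr rfl fun x _ => hterm x, ← Finset.sum_mul, hsum, zero_mul]
    have hfin : (↑(∑ j, (if p j * q j = (c j : ℝ) / r then (1 : ℤ) else -1) * (c j : ℤ)) : ℝ)
        = 0 := by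
      push_cast
      rw [← hreal]
    exact_mod_cast hfin
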